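/- arXiv:1105.3383 — 6 statements merged into one kernel-verified Lean document; each statement's English description precedes it below -/
import Mathlib

section
/- For a function f on a finite product space V^k with independent coordinates, the sum over j of the expected conditional variance along coordinate j is at least the total variance of f: ∑_j E[Var_{x_j} f] ≥ Var(f) (Efron–Stein subadditivity). -/
open Finset BigOperators

/-- Expectation under a weight function `p` on a finite type. -/
noncomputable def EXp {X : Type*} [Fintype X] (p : X → ℝ) (g : X → ℝ) : ℝ :=
  ∑ x, p x * g x

/-- Variance under a weight function `p`. -/
noncomputable def VarP {X : Type*} [Fintype X] (p : X → ℝ) (g : X → ℝ) : ℝ :=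
  EXp p (fun x => g x ^ 2) - (EXp p g) ^ 2

section aux

variable {X : Type*} [Fintype X]

/-- Jensen for the square. -/
lemma sq_EXp_le (p : X → ℝ) (hp : ∀ x, 0 ≤ p x) (hp1 : ∑ x, p x = 1) (g : X → ℝ) :
    (∑ x, p x * g x) ^ 2 ≤ ∑ x, p x * g x ^ 2 := by
  have h := Finset.sum_mul_sq_le_sq_mul_sq Finset.univ
      (fun x => Real.sqrt (p x)) (fun x => Real.sqrt (p x) * g x)
  have e1 : ∀ x : X, Real.sqrt (p x) * (Real.sqrt (p x) * g x) = p x * g x := by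
    intro x; rw [← mul_assoc, Real.mul_self_sqrt (hp x)]
  have e2 : ∀ x : X, (Real.sqrt (p x)) ^ 2 = p x := fun x => Real.sq_sqrt (hp x)
  have e3 : ∀ x : X, (Real.sqrt (p x) * g x) ^ 2 = p x * g x ^ 2 := by
    intro x; rw [mul_pow, e2]
  simp only [e1, e2, e3, hp1, one_mul] at h
  exact h

lemma two_mul_VarP (p : X → ℝ) (hp1 : ∑ x, p x = 1) (g : X → ℝ) :
    2 * VarP p g = ∑ x, ∑ y, p x * p y * (g x - g y) ^ 2 := by
  have : ∀ x y : X, p x * p y * (g x - g y) ^ 2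
      = (p x * g x ^ 2) * p y - 2 * ((p x * g x) * (p y * g y)) + p x * (p y * g y ^ 2) := by
    intro x y; ring
  simp only [this, Finset.sum_add_distrib, Finset.sum_sub_distrib, ← Finset.mul_sum,
    ← Finset.sum_mul, hp1]
  simp [VarP, EXp]; ring

/-- Convexity of variance. -/
lemma VarP_convex {Y : Type*} [Fintype Y] (p : X → ℝ) (hp : ∀ x, 0 ≤ p x)
    (hp1 : ∑ x, p x = 1) (q : Y → ℝ) (hq : ∀ y, 0 ≤ q y) (hq1 : ∑ y, q y = 1)
    (h : Y → X → ℝ) :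
    VarP p (fun x => ∑ y, q y * h y x) ≤ ∑ y, q y * VarP p (h y) := by
  have key : 2 * VarP p (fun x => ∑ y, q y * h y x) ≤ 2 * ∑ y, q y * VarP p (h y) := by
    rw [two_mul_VarP p hp1]
    have hrhs : 2 * ∑ y, q y * VarP p (h y)
        = ∑ y, q y * ∑ x, ∑ x', p x * p x' * (h y x - h y x') ^ 2 := by
      rw [Finset.mul_sum]
      refine Finset.sum_congr rfl fun y _ => ?_
      rw [← two_mul_VarP p hp1]; ring
    rw [hrhs]
    have step : ∀ x x' : X,
        p x * p x' * ((∑ y, q y * h y x) - ∑ y, q y * h y x') ^ 2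
        ≤ ∑ y, q y * (p x * p x' * (h y x - h y x') ^ 2) := by
      intro x x'
      have hsub : (∑ y, q y * h y x) - ∑ y, q y * h y x'
          = ∑ y, q y * (h y x - h y x') := by
        rw [← Finset.sum_sub_distrib]
        exact Finset.sum_congr rfl fun y _ => by ring
      rw [hsub]
      have hj := sq_EXp_le q hq hq1 (fun y => h y x - h y x')
      calc p x * p x' * (∑ y, q y * (h y x - h y x')) ^ 2
          ≤ p x * p x' * ∑ y, q y * (h y x - h y x') ^ 2 :=
            mul_le_mul_of_nonneg_left hj (mul_nonneg (hp x) (hp x'))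
        _ = ∑ y, q y * (p x * p x' * (h y x - h y x') ^ 2) := by
            rw [Finset.mul_sum]
            exact Finset.sum_congr rfl fun y _ => by ring
    calc ∑ x, ∑ x', p x * p x' * ((∑ y, q y * h y x) - ∑ y, q y * h y x') ^ 2
        ≤ ∑ x, ∑ x', ∑ y, q y * (p x * p x' * (h y x - h y x') ^ 2) :=
          Finset.sum_le_sum fun x _ => Finset.sum_le_sum fun x' _ => step x x'
      _ = ∑ y, q y * ∑ x, ∑ x', p x * p x' * (h y x - h y x') ^ 2 := by
          have e : ∑ x, ∑ x', ∑ y, q y * (p x * p x' * (h y x - h y x') ^ 2)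
              = ∑ y, ∑ x, ∑ x', q y * (p x * p x' * (h y x - h y x') ^ 2) :=
            (Finset.sum_congr rfl fun x _ => Finset.sum_comm).trans Finset.sum_comm
          rw [e]
          exact Finset.sum_congr rfl fun y _ => by simp [Finset.mul_sum]
  linarith

end aux

section main

variable {V : Type*} [Fintype V]

lemma sum_factor (k : ℕ) (p : V → ℝ) (F : (Fin (k + 1) → V) → ℝ) :
    ∑ x : Fin (k + 1) → V, (∏ i, p (x i)) * F x
      = ∑ z : Fin k → V, (∏ i, p (z i)) * ∑ v, p v * F (Fin.cons v z) := by
  rw [← Equiv.sum_comp (Fin.consEquiv fun _ => V)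
    (fun x => (∏ i, p (x i)) * F x), Fintype.sum_prod_type_right]
  refine Finset.sum_congr rfl fun z _ => ?_
  rw [Finset.mul_sum]
  refine Finset.sum_congr rfl fun v _ => ?_
  simp [Fin.prod_univ_succ, Fin.consEquiv]
  ring

lemma EXp_sub {X : Type*} [Fintype X] (p : X → ℝ) (a b : X → ℝ) :
    EXp p (fun x => a x - b x) = EXp p a - EXp p b := by
  simp [EXp, mul_sub, Finset.sum_sub_distrib]

theorem ES {V : Type*} [Fintype V] (k : ℕ)
    (p : V → ℝ) (hp : ∀ v, 0 ≤ p v) (hp1 : ∑ v, p v = 1)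
    (f : (Fin k → V) → ℝ) :
    VarP (fun x : Fin k → V => ∏ i, p (x i)) f ≤
      ∑ j : Fin k,
        EXp (fun x : Fin k → V => ∏ i, p (x i))
          (fun x => VarP p (fun y => f (Function.update x j y))) := by
  induction k with
  | zero => simp [VarP, EXp]
  | succ k ih =>
    set P : (Fin k → V) → ℝ := fun z => ∏ i, p (z i) with hP
    have hPnn : ∀ z, 0 ≤ P z := fun z => Finset.prod_nonneg fun i _ => hp (z i)
    set g : (Fin k → V) → ℝ := fun z => ∑ v, p v * f (Fin.cons v z) with hg
    -- decomposition
    have hEf : EXp (fun x : Fin (k+1) → V => ∏ i, p (x i)) f = EXp P g := by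
      rw [EXp, sum_factor k p f]; rfl
    have hEf2 : EXp (fun x : Fin (k+1) → V => ∏ i, p (x i)) (fun x => f x ^ 2)
        = EXp P (fun z => ∑ v, p v * f (Fin.cons v z) ^ 2) := by
      rw [EXp, sum_factor k p (fun x => f x ^ 2)]; rfl
    have hdecomp : VarP (fun x : Fin (k+1) → V => ∏ i, p (x i)) f
        = EXp P (fun z => VarP p (fun v => f (Fin.cons v z))) + VarP P g := by
      rw [VarP, hEf, hEf2, VarP]
      have : EXp P (fun z => VarP p fun v => f (Fin.cons v z))
          = EXp P (fun z => (∑ v, p v * f (Fin.cons v z) ^ 2) - g z ^ 2) := rfl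
      rw [this, EXp_sub]
      ring
    -- coordinate 0 term
    have hc0 : EXp (fun x : Fin (k+1) → V => ∏ i, p (x i))
        (fun x => VarP p (fun y => f (Function.update x 0 y)))
        = EXp P (fun z => VarP p (fun v => f (Fin.cons v z))) := by
      rw [EXp, sum_factor k p _]
      refine Finset.sum_congr rfl fun z _ => ?_
      congr 1
      have : ∀ v : V, VarP p (fun y => f (Function.update (Fin.cons v z) 0 y))
          = VarP p (fun v => f (Fin.cons v z)) := by
        intro v
        congr 1
        ext y
        rw [Fin.update_cons_zero]
      simp only [this, ← Finset.sum_mul, hp1, one_mul]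
    -- successor terms
    have hcsucc : ∀ i : Fin k,
        EXp P (fun z => VarP p (fun y => g (Function.update z i y)))
        ≤ EXp (fun x : Fin (k+1) → V => ∏ i, p (x i))
            (fun x => VarP p (fun y => f (Function.update x i.succ y))) := by
      intro i
      rw [EXp, EXp, sum_factor k p _]
      refine Finset.sum_le_sum fun z _ => ?_
      refine mul_le_mul_of_nonneg_left ?_ (hPnn z)
      have hupd : ∀ v y, f (Function.update (Fin.cons v z) i.succ y)
          = f (Fin.cons v (Function.update z i y)) := by
        intro v y; rw [← Fin.cons_update]
      simp only [hupd]
      have := VarP_convex p hp hp1 p hp hp1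
        (fun v y => f (Fin.cons v (Function.update z i y)))
      exact le_trans (le_of_eq (by rfl)) this
    calc VarP (fun x : Fin (k+1) → V => ∏ i, p (x i)) f
        = EXp P (fun z => VarP p (fun v => f (Fin.cons v z))) + VarP P g := hdecomp
      _ ≤ EXp P (fun z => VarP p (fun v => f (Fin.cons v z)))
            + ∑ i : Fin k, EXp P (fun z => VarP p (fun y => g (Function.update z i y))) := by
          linarith [ih g]
      _ ≤ EXp (fun x : Fin (k+1) → V => ∏ i, p (x i))
              (fun x => VarP p (fun y => f (Function.update x 0 y)))
            + ∑ i : Fin k, EXp (fun x : Fin (k+1) → V => ∏ i, p (x i))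
              (fun x => VarP p (fun y => f (Function.update x i.succ y))) := by
          rw [hc0]
          exact add_le_add le_rfl (Finset.sum_le_sum fun i _ => hcsucc i)
      _ = ∑ j : Fin (k+1), EXp (fun x : Fin (k+1) → V => ∏ i, p (x i))
              (fun x => VarP p (fun y => f (Function.update x j y))) := by
          rw [Fin.sum_univ_succ]

end main

/-- **Efron–Stein subadditivity of variance.** For `f` on a finite product
space `V^k` with independent coordinates, `∑_j E[Var_{x_j} f] ≥ Var(f)`. -/
theorem stmt_1 {V : Type*} [Fintype V] (k : ℕ)
    (p : V → ℝ) (hp : ∀ v, 0 ≤ p v) (hp1 : ∑ v, p v = 1)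
    (f : (Fin k → V) → ℝ) :
    ∑ j : Fin k,
      EXp (fun x : Fin k → V => ∏ i, p (x i))
        (fun x => VarP p (fun y => f (Function.update x j y))) ≥
    VarP (fun x : Fin k → V => ∏ i, p (x i)) f := by
  exact ES k p hp hp1 f
end

section
/- The conductance of the k-fold Cartesian power satisfies Φ(G^{□k}) = Φ(G)/k for any finite regular graph G. -/
open Finset BigOperators
open scoped Classical

/-- Expectation of `f` under the uniform measure on a finite type. -/
noncomputable def expec {V : Type*} [Fintype V] (f : V → ℝ) : ℝ :=
  (∑ x, f x) / (Fintype.card V : ℝ)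

/-- Variance of `f` under the uniform measure. -/
noncomputable def varE {V : Type*} [Fintype V] (f : V → ℝ) : ℝ :=
  expec (fun x => f x ^ 2) - (expec f) ^ 2

/-- The Laplacian quadratic form `⟨f, L_G f⟩ = (1/2)·E_{(x,y)∈E}[(f x − f y)²]` for a
`d`-regular graph `G`, with the uniform measure on (ordered) edges. -/
noncomputable def qform {V : Type*} [Fintype V] (G : SimpleGraph V) (d : ℕ)
    (f : V → ℝ) : ℝ :=
  (∑ x, ∑ y, if G.Adj x y then (f x - f y) ^ 2 else 0) /
    (2 * (d : ℝ) * (Fintype.card V : ℝ))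

/-- The `k`-fold Cartesian power `G^{□k}` of a graph `G`. -/
def cartPow {V : Type*} (G : SimpleGraph V) (k : ℕ) : SimpleGraph (Fin k → V) where
  Adj x y := ∃ j, G.Adj (x j) (y j) ∧ ∀ l, l ≠ j → x l = y l
  symm := by
    constructor
    rintro x y ⟨j, hadj, h⟩
    exact ⟨j, hadj.symm, fun l hl => (h l hl).symm⟩
  loopless := by
    constructor
    rintro x ⟨j, hadj, -⟩
    exact G.loopless.irrefl _ hadj

/-- The influence `⟨f, L_j f⟩` of coordinate `j` for a function on `V(G)^k`,
where `L_j` is the directional Laplacian of the `j`-th copy of the `d`-regular graph `G`. -/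
noncomputable def influence {V : Type*} [Fintype V] [DecidableEq V] (G : SimpleGraph V)
    (d : ℕ) (k : ℕ) (f : (Fin k → V) → ℝ) (j : Fin k) : ℝ :=
  (∑ x : Fin k → V, ∑ y : V,
      if G.Adj (x j) y then (f x - f (Function.update x j y)) ^ 2 else 0) /
    (2 * (d : ℝ) * ((Fintype.card V : ℝ)) ^ k)

/-- `Var_j(f) = ⟨f, K_j f⟩`: the expected conditional variance of `f` along coordinate `j`. -/
noncomputable def varAlong {V : Type*} [Fintype V] [DecidableEq V] (k : ℕ)
    (f : (Fin k → V) → ℝ) (j : Fin k) : ℝ :=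
  expec (fun x : Fin k → V =>
    expec (fun y : V => f (Function.update x j y) ^ 2) -
      (expec (fun y : V => f (Function.update x j y))) ^ 2)

/-- `Ent(f²) = E[f² log f²] − E[f²]·log E[f²]` under the uniform measure. -/
noncomputable def ent {V : Type*} [Fintype V] (f : V → ℝ) : ℝ :=
  expec (fun x => f x ^ 2 * Real.log (f x ^ 2)) -
    expec (fun x => f x ^ 2) * Real.log (expec (fun x => f x ^ 2))

/-- The set of constants `a` satisfying the log-Sobolev inequality
`⟨f, L_G f⟩ ≥ (a/2)·Ent(f²)` for all `f`; the log-Sobolev constant is its greatest element. -/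
def lsSet {V : Type*} [Fintype V] (G : SimpleGraph V) (d : ℕ) : Set ℝ :=
  {a | ∀ f : V → ℝ, qform G d f ≥ a / 2 * ent f}

/-- The conductance `Φ(G) = min over Boolean f of ⟨f, L_G f⟩ / (2 Var f)`. -/
noncomputable def conductance {V : Type*} [Fintype V] (G : SimpleGraph V) (d : ℕ) : ℝ :=
  sInf {r | ∃ f : V → ℝ, (∀ x, f x = 1 ∨ f x = -1) ∧ varE f ≠ 0 ∧
    r = qform G d f / (2 * varE f)}

section ExpecBasic
variable {V : Type*} [Fintype V]

lemma card_ne' [Nonempty V] : (Fintype.card V : ℝ) ≠ 0 := by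
  exact_mod_cast Fintype.card_ne_zero

lemma expec_const [Nonempty V] (c : ℝ) : expec (fun _ : V => c) = c := by
  rw [expec, Finset.sum_const, card_univ, nsmul_eq_mul, mul_comm, mul_div_assoc,
    div_self card_ne', mul_one]

lemma expec_add (f g : V → ℝ) : expec (fun x => f x + g x) = expec f + expec g := by
  simp [expec, Finset.sum_add_distrib, add_div]

lemma expec_sub (f g : V → ℝ) : expec (fun x => f x - g x) = expec f - expec g := by
  simp [expec, Finset.sum_sub_distrib, sub_div]

lemma expec_const_mul (c : ℝ) (f : V → ℝ) : expec (fun x => c * f x) = c * expec f := by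
  simp [expec, ← Finset.mul_sum, mul_div_assoc]

lemma expec_mono {f g : V → ℝ} (h : ∀ x, f x ≤ g x) : expec f ≤ expec g := by
  unfold expec
  rcases isEmpty_or_nonempty V with h'|h'
  · simp
  · have hc : (0:ℝ) < Fintype.card V := by exact_mod_cast Fintype.card_pos
    gcongr
    exact h _

lemma expec_nonneg {f : V → ℝ} (h : ∀ x, 0 ≤ f x) : 0 ≤ expec f :=
  div_nonneg (Finset.sum_nonneg fun x _ => h x) (Nat.cast_nonneg _)

lemma varE_eq [Nonempty V] (f : V → ℝ) : varE f = expec (fun x => (f x - expec f) ^ 2) := by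
  have hn : (Fintype.card V : ℝ) ≠ 0 := card_ne'
  have h : ∑ x, (f x - expec f) ^ 2
      = (∑ x, f x ^ 2) - 2 * expec f * (∑ x, f x) + (Fintype.card V : ℝ) * (expec f) ^ 2 := by
    rw [Finset.sum_congr rfl (fun x _ => (by ring :
      (f x - expec f) ^ 2 = f x ^ 2 - 2 * expec f * f x + (expec f) ^ 2)),
      Finset.sum_add_distrib, Finset.sum_sub_distrib, ← Finset.mul_sum, Finset.sum_const,
      card_univ, nsmul_eq_mul]
  unfold varE expec at *
  rw [h]
  field_simp
  ring

lemma varE_nonneg [Nonempty V] (f : V → ℝ) : 0 ≤ varE f := by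
  rw [varE_eq]; exact expec_nonneg fun x => sq_nonneg _

lemma sq_expec_le [Nonempty V] (f : V → ℝ) : (expec f) ^ 2 ≤ expec (fun x => f x ^ 2) := by
  have := varE_nonneg f
  unfold varE at this
  linarith

end ExpecBasic

section Prod
variable {α β : Type*} [Fintype α] [Fintype β] [Nonempty α] [Nonempty β]
set_option linter.unusedSectionVars false

lemma expec_equiv {W V : Type*} [Fintype W] [Fintype V] (e : W ≃ V) (f : V → ℝ) :
    expec (fun w => f (e w)) = expec f := by
  unfold expec
  rw [Equiv.sum_comp e f, Fintype.card_congr e]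

lemma varE_equiv {W V : Type*} [Fintype W] [Fintype V] (e : W ≃ V) (f : V → ℝ) :
    varE (fun w => f (e w)) = varE f := by
  unfold varE
  rw [expec_equiv e f, expec_equiv e (fun x => f x ^ 2)]

lemma expec_prod (f : α × β → ℝ) :
    expec f = expec (fun a => expec (fun b => f (a, b))) := by
  unfold expec
  rw [Fintype.sum_prod_type, Fintype.card_prod, Nat.cast_mul, ← Finset.sum_div, div_div,
    mul_comm]

lemma expec_prod' (f : α × β → ℝ) :
    expec f = expec (fun b => expec (fun a => f (a, b))) := by
  unfold expec
  rw [Fintype.sum_prod_type_right, Fintype.card_prod, Nat.cast_mul, ← Finset.sum_div, div_div]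

lemma expec_comm (q : α → β → ℝ) :
    expec (fun a => expec (fun b => q a b)) = expec (fun b => expec (fun a => q a b)) := by
  rw [← expec_prod (fun p => q p.1 p.2), ← expec_prod' (fun p => q p.1 p.2)]

lemma totalVar (f : α × β → ℝ) :
    varE f = expec (fun b => varE (fun a => f (a, b)))
      + varE (fun b => expec (fun a => f (a, b))) := by
  unfold varE
  rw [expec_prod' f, expec_prod' (fun p => f p ^ 2), expec_sub]
  ring

lemma varE_expec_le (q : α → β → ℝ) :
    varE (fun b => expec (fun a => q a b)) ≤ expec (fun a => varE (q a)) := by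
  have hc : expec (fun b => expec (fun a => q a b)) = expec (fun a => expec (q a)) :=
    (expec_comm q).symm
  rw [varE_eq]
  have h1 : ∀ b, expec (fun a => q a b) - expec (fun b => expec (fun a => q a b))
      = expec (fun a => q a b - expec (q a)) := by
    intro b
    rw [expec_sub, hc]
  calc expec (fun b => (expec (fun a => q a b) - expec (fun b => expec (fun a => q a b))) ^ 2)
      ≤ expec (fun b => expec (fun a => (q a b - expec (q a)) ^ 2)) := by
        apply expec_mono
        intro b
        rw [h1 b]
        exact sq_expec_le _
    _ = expec (fun a => expec (fun b => (q a b - expec (q a)) ^ 2)) :=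
        (expec_comm _).symm
    _ = expec (fun a => varE (q a)) := by
        apply congrArg
        funext a
        rw [varE_eq]

end Prod

section ES
set_option linter.unusedSectionVars false
variable {V : Type*} [Fintype V] [DecidableEq V] [Nonempty V]

lemma varAlong_eq {k : ℕ} (f : (Fin k → V) → ℝ) (j : Fin k) :
    varAlong k f j = expec (fun x : Fin k → V => varE (fun v => f (Function.update x j v))) :=
  rfl

lemma expec_cons {k : ℕ} (φ : V → (Fin k → V) → ℝ) :
    expec (fun y : Fin (k+1) → V => φ (y 0) (Fin.tail y))
      = expec (fun v => expec (fun x => φ v x)) := by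
  have e := Fin.consEquiv (fun _ : Fin (k+1) => V)
  rw [← expec_equiv (Fin.consEquiv (fun _ : Fin (k+1) => V))
      (fun y : Fin (k+1) → V => φ (y 0) (Fin.tail y))]
  rw [show (fun w : V × (Fin k → V) =>
      (fun y : Fin (k+1) → V => φ (y 0) (Fin.tail y)) ((Fin.consEquiv _) w))
      = (fun w : V × (Fin k → V) => φ w.1 w.2) from ?_]
  · exact expec_prod _
  · funext w
    simp [Fin.consEquiv]

lemma varE_cons {k : ℕ} (f : (Fin (k+1) → V) → ℝ) :
    varE f = varE (fun p : V × (Fin k → V) => f (Fin.cons p.1 p.2)) := by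
  rw [← varE_equiv (Fin.consEquiv (fun _ : Fin (k+1) => V)) f]
  apply congrArg
  funext p
  simp [Fin.consEquiv]

lemma efron_stein : ∀ (k : ℕ) (f : (Fin k → V) → ℝ), varE f ≤ ∑ j, varAlong k f j := by
  intro k
  induction k with
  | zero =>
    intro f
    have : varE f = 0 := by
      unfold varE expec
      simp
    simp [this]
  | succ k ih =>
    intro f
    rw [varE_cons f, totalVar, Fin.sum_univ_succ]
    have h0 : varAlong (k+1) f 0
        = expec (fun x : Fin k → V => varE (fun v : V => f (Fin.cons v x))) := by
      rw [varAlong_eq]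
      have e1 : (fun y : Fin (k+1) → V => varE (fun v => f (Function.update y 0 v)))
          = (fun y : Fin (k+1) → V => varE (fun w : V => f (Fin.cons w (Fin.tail y)))) := by
        funext y
        apply congrArg
        funext v
        conv_lhs => rw [← Fin.cons_self_tail y]
        rw [Fin.update_cons_zero]
      rw [e1]
      have hc := expec_cons (V := V)
        (fun (_ : V) (x : Fin k → V) => varE (fun w : V => f (Fin.cons w x)))
      rw [hc, expec_const]
    rw [h0]
    gcongr
    calc varE (fun x : Fin k → V => expec (fun v : V => f (Fin.cons v x)))
        ≤ ∑ j : Fin k, varAlong k (fun x : Fin k → V => expec (fun v : V => f (Fin.cons v x))) j :=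
          ih _
      _ ≤ ∑ j : Fin k, varAlong (k+1) f (Fin.succ j) := by
          apply Finset.sum_le_sum
          intro j _
          have hsucc : varAlong (k+1) f (Fin.succ j)
              = expec (fun v : V => expec (fun x : Fin k → V =>
                  varE (fun w : V => f (Fin.cons v (Function.update x j w))))) := by
            rw [varAlong_eq]
            have e1 : (fun y : Fin (k+1) → V => varE (fun w => f (Function.update y (Fin.succ j) w)))
                = (fun y : Fin (k+1) → V =>
                    varE (fun w : V => f (Fin.cons (y 0) (Function.update (Fin.tail y) j w)))) := by
              funext y
              apply congrArg
              funext w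
              conv_lhs => rw [← Fin.cons_self_tail y]
              rw [Fin.cons_update]
            rw [e1]
            exact expec_cons (V := V)
              (fun (v : V) (x : Fin k → V) => varE (fun w : V => f (Fin.cons v (Function.update x j w))))
          rw [hsucc, varAlong_eq]
          calc expec (fun x : Fin k → V =>
                  varE (fun w : V => expec (fun v : V => f (Fin.cons v (Function.update x j w)))))
              ≤ expec (fun x : Fin k → V =>
                  expec (fun v : V => varE (fun w : V => f (Fin.cons v (Function.update x j w))))) := by
                apply expec_mono
                intro x
                exact varE_expec_le (fun v w => f (Fin.cons v (Function.update x j w)))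
            _ = expec (fun v : V => expec (fun x : Fin k → V =>
                  varE (fun w : V => f (Fin.cons v (Function.update x j w))))) :=
                expec_comm _
end ES

section Comb
set_option linter.unusedSectionVars false
variable {V : Type*} [Fintype V] [DecidableEq V] [Nonempty V]

lemma sum_update_mul {k : ℕ} (h : (Fin k → V) → ℝ) (j : Fin k) :
    ∑ x : Fin k → V, ∑ u : V, h (Function.update x j u)
      = (Fintype.card V : ℝ) * ∑ x : Fin k → V, h x := by
  calc ∑ x : Fin k → V, ∑ u : V, h (Function.update x j u)
      = ∑ p : (Fin k → V) × V, h (Function.update p.1 j p.2) := by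
        rw [Fintype.sum_prod_type]
    _ = ∑ p : (Fin k → V) × V, h p.1 := by
        have hinv : Function.Involutive
            (fun p : (Fin k → V) × V => (Function.update p.1 j p.2, p.1 j)) := by
          rintro ⟨x, u⟩
          simp [Function.update_idem]
        exact Fintype.sum_bijective _ hinv.bijective _ _ (fun p => rfl)
    _ = (Fintype.card V : ℝ) * ∑ x : Fin k → V, h x := by
        rw [Fintype.sum_prod_type]
        simp only [Finset.sum_const, card_univ, nsmul_eq_mul]
        rw [← Finset.mul_sum]

lemma card_pow_real (k : ℕ) :
    (Fintype.card (Fin k → V) : ℝ) = (Fintype.card V : ℝ) ^ k := by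
  rw [Fintype.card_fun]
  push_cast
  simp

lemma sum_coord {k : ℕ} (h : V → ℝ) (j : Fin k) :
    (Fintype.card V : ℝ) * ∑ x : Fin k → V, h (x j)
      = (Fintype.card V : ℝ) ^ k * ∑ v, h v := by
  rw [← sum_update_mul (fun x => h (x j)) j]
  have : ∀ x : Fin k → V, ∑ u : V, h (Function.update x j u j) = ∑ u : V, h u := by
    intro x
    apply Finset.sum_congr rfl
    intro u _
    rw [Function.update_self]
  rw [Finset.sum_congr rfl (fun x _ => this x), Finset.sum_const, card_univ, nsmul_eq_mul,
    card_pow_real]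

lemma expec_coord {k : ℕ} (h : V → ℝ) (j : Fin k) :
    expec (fun x : Fin k → V => h (x j)) = expec h := by
  unfold expec
  rw [card_pow_real, div_eq_div_iff (by positivity) (by exact_mod_cast Fintype.card_pos.ne')]
  linear_combination sum_coord h j

lemma sum_pow_adj (G : SimpleGraph V) {k : ℕ}
    (F : (Fin k → V) → (Fin k → V) → ℝ) :
    (∑ x : Fin k → V, ∑ y : Fin k → V, if (cartPow G k).Adj x y then F x y else 0)
      = ∑ j : Fin k, ∑ x : Fin k → V, ∑ v : V,
          if G.Adj (x j) v then F x (Function.update x j v) else 0 := by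
  conv_rhs => rw [Finset.sum_comm]
  refine Finset.sum_congr rfl fun x _ => ?_
  have step1 : ∀ y : Fin k → V,
      (if (cartPow G k).Adj x y then F x y else 0)
        = ∑ j : Fin k, if (G.Adj (x j) (y j) ∧ ∀ l, l ≠ j → x l = y l) then F x y else 0 := by
    intro y
    by_cases hadj : (cartPow G k).Adj x y
    · obtain ⟨j₀, hj₀, hrest⟩ := hadj
      rw [if_pos ⟨j₀, hj₀, hrest⟩]
      rw [Finset.sum_eq_single j₀]
      · rw [if_pos ⟨hj₀, hrest⟩]
      · intro j _ hne
        rw [if_neg]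
        rintro ⟨hj, -⟩
        exact hj.ne (hrest j hne)
      · intro habs
        exact absurd (Finset.mem_univ j₀) habs
    · rw [if_neg hadj, eq_comm]
      apply Finset.sum_eq_zero
      intro j _
      rw [if_neg]
      rintro ⟨h1, h2⟩
      exact hadj ⟨j, h1, h2⟩
  rw [Finset.sum_congr rfl (fun y _ => step1 y), Finset.sum_comm]
  refine Finset.sum_congr rfl fun j _ => ?_
  rw [← Finset.sum_filter, ← Finset.sum_filter]
  refine Finset.sum_bij' (fun y _ => y j) (fun v _ => Function.update x j v) ?_ ?_ ?_ ?_ ?_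
  · intro y hy
    rw [Finset.mem_filter] at hy ⊢
    exact ⟨Finset.mem_univ _, hy.2.1⟩
  · intro v hv
    rw [Finset.mem_filter] at hv ⊢
    refine ⟨Finset.mem_univ _, ?_, ?_⟩
    · rw [Function.update_self]
      exact hv.2
    · intro l hl
      rw [Function.update_of_ne hl]
  · intro y hy
    rw [Finset.mem_filter] at hy
    funext l
    by_cases hl : l = j
    · subst hl
      rw [Function.update_self]
    · rw [Function.update_of_ne hl]
      exact hy.2.2 l hl
  · intro v hv
    rw [Function.update_self]
  · intro y hy
    rw [Finset.mem_filter] at hy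
    congr 1
    funext l
    by_cases hl : l = j
    · subst hl
      rw [Function.update_self]
    · rw [Function.update_of_ne hl]
      exact (hy.2.2 l hl).symm
end Comb

section Main
set_option linter.unusedSectionVars false
variable {V : Type*} [Fintype V] [DecidableEq V] [Nonempty V]

lemma qform_cartPow (G : SimpleGraph V) (d k : ℕ) (f : (Fin k → V) → ℝ) :
    qform (cartPow G k) (k * d) f = (∑ j, influence G d k f j) / k := by
  unfold qform influence
  rw [sum_pow_adj, ← Finset.sum_div, div_div, card_pow_real]
  congr 1
  push_cast
  ring

lemma influence_eq (G : SimpleGraph V) {d : ℕ} (hd : 0 < d) {k : ℕ}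
    (f : (Fin k → V) → ℝ) (j : Fin k) :
    influence G d k f j
      = expec (fun x : Fin k → V => qform G d (fun v => f (Function.update x j v))) := by
  have hN : (Fintype.card V : ℝ) ≠ 0 := card_ne'
  have hd' : (d : ℝ) ≠ 0 := by positivity
  set A : (Fin k → V) → ℝ :=
    fun x => ∑ v : V, if G.Adj (x j) v then (f x - f (Function.update x j v)) ^ 2 else 0 with hA
  have key : ∀ x : Fin k → V,
      ∑ u : V, A (Function.update x j u)
        = qform G d (fun v => f (Function.update x j v)) * (2 * (d : ℝ) * (Fintype.card V : ℝ)) := by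
    intro x
    unfold qform
    rw [div_mul_cancel₀ _ (by positivity)]
    apply Finset.sum_congr rfl
    intro u _
    rw [hA]
    apply Finset.sum_congr rfl
    intro v _
    rw [Function.update_self, Function.update_idem]
  have h1 : (Fintype.card V : ℝ) * ∑ x : Fin k → V, A x
      = (∑ x : Fin k → V, qform G d (fun v => f (Function.update x j v)))
          * (2 * (d : ℝ) * (Fintype.card V : ℝ)) := by
    rw [← sum_update_mul A j, Finset.sum_congr rfl (fun x _ => key x), ← Finset.sum_mul]
  have h2 : ∑ x : Fin k → V, A x
      = (∑ x : Fin k → V, qform G d (fun v => f (Function.update x j v))) * (2 * (d : ℝ)) := by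
    apply mul_left_cancel₀ hN
    rw [h1]
    ring
  unfold influence expec
  rw [show (∑ x : Fin k → V, ∑ v : V,
      if G.Adj (x j) v then (f x - f (Function.update x j v)) ^ 2 else 0) = ∑ x, A x from rfl,
    h2, card_pow_real]
  field_simp

lemma varAlong_eq' {k : ℕ} (f : (Fin k → V) → ℝ) (j : Fin k) :
    varAlong k f j = expec (fun x : Fin k → V => varE (fun v => f (Function.update x j v))) :=
  rfl

lemma qform_nonneg (G : SimpleGraph V) (d : ℕ) (g : V → ℝ) : 0 ≤ qform G d g := by
  unfold qform
  apply div_nonneg _ (by positivity)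
  apply Finset.sum_nonneg
  intro x _
  apply Finset.sum_nonneg
  intro y _
  split
  · exact sq_nonneg _
  · exact le_refl 0

lemma mem_nonneg (G : SimpleGraph V) (d : ℕ) {r : ℝ}
    (hr : r ∈ {r | ∃ f : V → ℝ, (∀ x, f x = 1 ∨ f x = -1) ∧ varE f ≠ 0 ∧
      r = qform G d f / (2 * varE f)}) : 0 ≤ r := by
  obtain ⟨g, hg, hvar, rfl⟩ := hr
  have h1 : 0 < varE g := lt_of_le_of_ne (varE_nonneg g) (Ne.symm hvar)
  exact div_nonneg (qform_nonneg G d g) (by linarith)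

lemma cond_bdd (G : SimpleGraph V) (d : ℕ) :
    BddBelow {r | ∃ f : V → ℝ, (∀ x, f x = 1 ∨ f x = -1) ∧ varE f ≠ 0 ∧
      r = qform G d f / (2 * varE f)} :=
  ⟨0, fun r hr => mem_nonneg G d hr⟩

lemma cond_nonneg (G : SimpleGraph V) (d : ℕ) : 0 ≤ conductance G d :=
  Real.sInf_nonneg (fun r hr => mem_nonneg G d hr)

lemma qform_ge (G : SimpleGraph V) (d : ℕ) (g : V → ℝ) (hg : ∀ x, g x = 1 ∨ g x = -1) :
    2 * conductance G d * varE g ≤ qform G d g := by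
  by_cases hvar : varE g = 0
  · rw [hvar, mul_zero]
    exact qform_nonneg G d g
  · have h1 : 0 < varE g := lt_of_le_of_ne (varE_nonneg g) (Ne.symm hvar)
    have h2 : conductance G d ≤ qform G d g / (2 * varE g) :=
      csInf_le (cond_bdd G d) ⟨g, hg, hvar, rfl⟩
    rw [le_div_iff₀ (by linarith)] at h2
    nlinarith

lemma exists_boolean [Nontrivial V] :
    ∃ g : V → ℝ, (∀ x, g x = 1 ∨ g x = -1) ∧ varE g ≠ 0 := by
  obtain ⟨a, b, hab⟩ := exists_pair_ne V
  refine ⟨fun x => if x = a then 1 else -1, fun x => by dsimp only; split <;> simp, ?_⟩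
  have hn : (2 : ℝ) ≤ (Fintype.card V : ℝ) := by
    exact_mod_cast Fintype.one_lt_card
  have hN : (0 : ℝ) < (Fintype.card V : ℝ) := by linarith
  have hsq : expec (fun x : V => (if x = a then (1:ℝ) else -1) ^ 2) = 1 := by
    rw [show (fun x : V => (if x = a then (1:ℝ) else -1) ^ 2) = fun _ : V => (1:ℝ) from by
      funext x; split <;> norm_num]
    exact expec_const 1
  have hsum : ∑ x : V, (if x = a then (1:ℝ) else -1) = 2 - (Fintype.card V : ℝ) := by
    rw [show (fun x : V => if x = a then (1:ℝ) else -1)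
        = fun x : V => (if x = a then (2:ℝ) else 0) - 1 from by funext x; split <;> norm_num]
    rw [Finset.sum_sub_distrib, Finset.sum_ite_eq' univ a (fun _ => (2:ℝ)),
      if_pos (Finset.mem_univ a), Finset.sum_const, card_univ, nsmul_eq_mul, mul_one]
  have hexp : expec (fun x : V => if x = a then (1:ℝ) else -1)
      = (2 - (Fintype.card V : ℝ)) / (Fintype.card V : ℝ) := by
    rw [expec, hsum]
  unfold varE
  rw [hsq, hexp]
  have hlt : ((2 - (Fintype.card V : ℝ)) / (Fintype.card V : ℝ)) ^ 2 < 1 := by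
    rw [div_pow, div_lt_one (by positivity)]
    nlinarith
  intro hcon
  nlinarith [hlt]

end Main

section Final
set_option linter.unusedSectionVars false
variable {V : Type*} [Fintype V] [DecidableEq V] [Nonempty V]

lemma pullback_varE {k : ℕ} (g : V → ℝ) (j₀ : Fin k) :
    varE (fun x : Fin k → V => g (x j₀)) = varE g := by
  unfold varE
  rw [expec_coord g j₀]
  have h2 := expec_coord (fun v => g v ^ 2) j₀
  rw [show (fun x : Fin k → V => g (x j₀) ^ 2)
      = (fun x : Fin k → V => (fun v => g v ^ 2) (x j₀)) from rfl, h2]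

lemma pullback_qform (G : SimpleGraph V) {d : ℕ} (hd : 0 < d) {k : ℕ} (hk : 0 < k)
    (g : V → ℝ) (j₀ : Fin k) :
    qform (cartPow G k) (k * d) (fun x => g (x j₀)) = qform G d g / k := by
  rw [qform_cartPow]
  congr 1
  rw [Finset.sum_eq_single j₀]
  · unfold influence qform
    rw [div_eq_div_iff (by positivity) (by positivity)]
    have hre : (∑ x : Fin k → V, ∑ v : V,
        if G.Adj (x j₀) v then (g (x j₀) - g (Function.update x j₀ v j₀)) ^ 2 else 0)
        = ∑ x : Fin k → V,
            (fun u => ∑ v : V, if G.Adj u v then (g u - g v) ^ 2 else 0) (x j₀) := by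
      apply Finset.sum_congr rfl
      intro x _
      dsimp only
      apply Finset.sum_congr rfl
      intro v _
      rw [Function.update_self]
    rw [hre]
    linear_combination (2 * (d : ℝ))
      * sum_coord (fun u => ∑ v : V, if G.Adj u v then (g u - g v) ^ 2 else 0) j₀
  · intro j _ hne
    unfold influence
    rw [show (∑ x : Fin k → V, ∑ v : V,
        if G.Adj (x j) v then (g (x j₀) - g (Function.update x j v j₀)) ^ 2 else 0) = 0
      from ?_, zero_div]
    apply Finset.sum_eq_zero
    intro x _
    apply Finset.sum_eq_zero
    intro v _
    rw [Function.update_of_ne (Ne.symm hne), sub_self]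
    simp
  · intro h
    exact absurd (Finset.mem_univ j₀) h

end Final

/-- The conductance of the `k`-fold Cartesian power satisfies
`Φ(G^{□k}) = Φ(G)/k` for any finite regular graph `G`. -/

theorem stmt_7 {V : Type*} [Fintype V] [DecidableEq V] [Nontrivial V]
    (G : SimpleGraph V) (d : ℕ) (hd : 0 < d) (hreg : G.IsRegularOfDegree d)
    (k : ℕ) (hk : 0 < k) :
    conductance (cartPow G k) (k * d) = conductance G d / k := by
  have hkR : (0 : ℝ) < (k : ℝ) := by exact_mod_cast hk
  set j₀ : Fin k := ⟨0, hk⟩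
  obtain ⟨g₀, hg₀, hv₀⟩ := exists_boolean (V := V)
  have hmem : ∀ g : V → ℝ, (∀ x, g x = 1 ∨ g x = -1) → varE g ≠ 0 →
      qform G d g / (2 * varE g) / k ∈
        {r | ∃ f : (Fin k → V) → ℝ, (∀ x, f x = 1 ∨ f x = -1) ∧ varE f ≠ 0 ∧
          r = qform (cartPow G k) (k * d) f / (2 * varE f)} := by
    intro g hg hv
    refine ⟨fun x => g (x j₀), fun x => hg _, by rw [pullback_varE]; exact hv, ?_⟩
    rw [pullback_qform G hd hk g j₀, pullback_varE]
    rw [div_div, div_div, mul_comm]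
  have hSGne : {r | ∃ g : V → ℝ, (∀ x, g x = 1 ∨ g x = -1) ∧ varE g ≠ 0 ∧
      r = qform G d g / (2 * varE g)}.Nonempty := ⟨_, g₀, hg₀, hv₀, rfl⟩
  apply le_antisymm
  · have h1 : ∀ r ∈ {r | ∃ g : V → ℝ, (∀ x, g x = 1 ∨ g x = -1) ∧ varE g ≠ 0 ∧
        r = qform G d g / (2 * varE g)}, conductance (cartPow G k) (k * d) * k ≤ r := by
      rintro r ⟨g, hg, hv, rfl⟩
      have h := csInf_le (cond_bdd (cartPow G k) (k * d)) (hmem g hg hv)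
      exact (le_div_iff₀ hkR).mp h
    have h2 : conductance (cartPow G k) (k * d) * k ≤ conductance G d :=
      le_csInf hSGne h1
    exact (le_div_iff₀ hkR).mpr h2
  · apply le_csInf ⟨_, hmem g₀ hg₀ hv₀⟩
    rintro r ⟨f, hf, hv, rfl⟩
    have hvpos : 0 < varE f := lt_of_le_of_ne (varE_nonneg f) (Ne.symm hv)
    set Φ := conductance G d with hΦ
    have hj : ∀ j : Fin k, 2 * Φ * varAlong k f j ≤ influence G d k f j := by
      intro j
      calc 2 * Φ * varAlong k f j
          = expec (fun x : Fin k → V =>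
              2 * Φ * varE (fun v => f (Function.update x j v))) := by
            rw [varAlong_eq', ← expec_const_mul]
        _ ≤ expec (fun x : Fin k → V => qform G d (fun v => f (Function.update x j v))) :=
            expec_mono fun x => qform_ge G d _ (fun v => hf _)
        _ = influence G d k f j := (influence_eq G hd f j).symm
    have key : 2 * Φ * varE f ≤ qform (cartPow G k) (k * d) f * k := by
      rw [qform_cartPow, div_mul_cancel₀ _ (ne_of_gt hkR)]
      calc 2 * Φ * varE f
          ≤ 2 * Φ * ∑ j, varAlong k f j := by
            have hES := efron_stein k f
            have hΦ0 : 0 ≤ Φ := cond_nonneg G d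
            nlinarith
        _ = ∑ j, 2 * Φ * varAlong k f j := Finset.mul_sum _ _ _
        _ ≤ ∑ j, influence G d k f j := Finset.sum_le_sum fun j _ => hj j
    rw [div_le_div_iff₀ hkR (by linarith)]
    linarith [key]
end

section
/- Let H be a finite regular graph with log-Sobolev constant at least α/k (in particular H = G^{□k}). Then for any t ≤ 1/e² and any h : V(H) → ℝ: ⟨h, L_H h⟩ ≥ (α/2k)·(√t log t · ‖h‖₁ + log t · ‖h‖₂² − ‖h‖₂² log ‖h‖₂²). -/
open Finset BigOperators
open scoped Classical

lemma ptwise_stmt10 (t a : ℝ) (ht0 : 0 < t) (hlogt : Real.log t ≤ -2) (ha : 0 ≤ a) :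
    Real.sqrt t * Real.log t * a + Real.log t * a ^ 2 ≤ a ^ 2 * Real.log (a ^ 2) := by
  rcases eq_or_lt_of_le ha with rfl | ha
  · simp
  have hst : 0 < Real.sqrt t := Real.sqrt_pos.mpr ht0
  by_cases hat : t ≤ a ^ 2
  · have h1 : Real.log t ≤ Real.log (a ^ 2) := Real.log_le_log ht0 hat
    nlinarith [mul_pos hst ha, sq_nonneg a]
  · push_neg at hat
    have key : Real.log (Real.sqrt t / a) ≤ Real.sqrt t / a - 1 :=
      Real.log_le_sub_one_of_pos (by positivity)
    have hlog2 : Real.log (a ^ 2) = Real.log t - 2 * Real.log (Real.sqrt t / a) := by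
      rw [Real.log_div (ne_of_gt hst) (ne_of_gt ha), Real.log_sqrt ht0.le,
        Real.log_pow]
      ring
    rw [hlog2]
    have hk2 : 2 * a ^ 2 * Real.log (Real.sqrt t / a) ≤ 2 * a ^ 2 * (Real.sqrt t / a - 1) :=
      mul_le_mul_of_nonneg_left key (by positivity)
    have hdiv : 2 * a ^ 2 * (Real.sqrt t / a - 1) = 2 * a * Real.sqrt t - 2 * a ^ 2 := by
      field_simp
    nlinarith [mul_pos hst ha]

/-- If a finite regular graph `H` (e.g. `H = G^{□k}`) has log-Sobolev
constant at least `α/k`, then for any `0 < t ≤ 1/e²` and any `h : V(H) → ℝ`,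
`⟨h, L_H h⟩ ≥ (α/2k)·(√t log t·‖h‖₁ + log t·‖h‖₂² − ‖h‖₂² log ‖h‖₂²)`. -/
theorem stmt_10 {V : Type*} [Fintype V] [DecidableEq V] [Nonempty V]
    (H : SimpleGraph V) (dH : ℕ) (hd : 0 < dH) (hreg : H.IsRegularOfDegree dH)
    (α : ℝ) (hα : 0 < α) (k : ℕ) (hk : 0 < k)
    (hls : (α / k) ∈ lsSet H dH)
    (t : ℝ) (ht0 : 0 < t) (ht : t ≤ 1 / Real.exp 2)
    (h : V → ℝ) :
    qform H dH h ≥ α / (2 * k) *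
      (Real.sqrt t * Real.log t * expec (fun x => |h x|) +
        Real.log t * expec (fun x => h x ^ 2) -
        expec (fun x => h x ^ 2) * Real.log (expec (fun x => h x ^ 2))) := by
  have hlogt : Real.log t ≤ -2 := by
    have := Real.log_le_log ht0 ht
    rwa [Real.log_div one_ne_zero (Real.exp_ne_zero 2), Real.log_one, Real.log_exp,
      zero_sub] at this
  have hcard : (0:ℝ) < (Fintype.card V : ℝ) := by
    exact_mod_cast Fintype.card_pos
  have hlin : expec (fun x => Real.sqrt t * Real.log t * |h x| + Real.log t * h x ^ 2)
      = Real.sqrt t * Real.log t * expec (fun x => |h x|) +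
        Real.log t * expec (fun x => h x ^ 2) := by
    unfold expec
    rw [Finset.sum_add_distrib, ← Finset.mul_sum, ← Finset.mul_sum]
    ring
  have hkey : Real.sqrt t * Real.log t * expec (fun x => |h x|) +
      Real.log t * expec (fun x => h x ^ 2) ≤
      expec (fun x => h x ^ 2 * Real.log (h x ^ 2)) := by
    rw [← hlin]
    unfold expec
    gcongr with x _
    have := ptwise_stmt10 t (|h x|) ht0 hlogt (abs_nonneg _)
    rwa [sq_abs] at this
  have hq := hls h
  have hkpos : (0:ℝ) < (k : ℝ) := by exact_mod_cast hk
  have hcpos : (0:ℝ) < α / (2 * k) := by positivity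
  calc qform H dH h ≥ α / ↑k / 2 * ent h := hq
    _ ≥ α / (2 * ↑k) *
        (Real.sqrt t * Real.log t * expec (fun x => |h x|) +
          Real.log t * expec (fun x => h x ^ 2) -
          expec (fun x => h x ^ 2) * Real.log (expec (fun x => h x ^ 2))) := by
        have heq : α / (k:ℝ) / 2 = α / (2 * k) := by ring
        rw [heq]
        unfold ent
        apply mul_le_mul_of_nonneg_left _ hcpos.le
        linarith [hkey]
end

section
/- For any probability space and function h with values in ℝ, and any 0 < t ≤ 1/e²: E[h² log h²] ≥ √t log t · E|h| + log t · E[h²]. -/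
open Finset BigOperators

/-- `a log a` is antitone on `(0, 1/e]`. -/
lemma mul_log_anti {a b : ℝ} (ha : 0 < a) (hab : a ≤ b) (hb : b ≤ 1 / Real.exp 1) :
    b * Real.log b ≤ a * Real.log a := by
  have hb0 : 0 < b := ha.trans_le hab
  have hx : Real.exp 1 ≤ 1 / b := by
    rw [le_div_iff₀ hb0]
    calc Real.exp 1 * b ≤ Real.exp 1 * (1 / Real.exp 1) :=
      mul_le_mul_of_nonneg_left hb (Real.exp_pos 1).le
    _ = 1 := mul_one_div_cancel (Real.exp_pos 1).ne'
  have hxy : 1 / b ≤ 1 / a := one_div_le_one_div_of_le ha hab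
  have hy : Real.exp 1 ≤ 1 / a := hx.trans hxy
  have := Real.log_div_self_antitoneOn hx hy hxy
  dsimp only at this
  -- this : log (1/a) / (1/a) ≤ log (1/b) / (1/b)
  have ea : Real.log (1 / a) / (1 / a) = -(a * Real.log a) := by
    rw [one_div, Real.log_inv]; field_simp
  have eb : Real.log (1 / b) / (1 / b) = -(b * Real.log b) := by
    rw [one_div, Real.log_inv]; field_simp
  rw [ea, eb] at this
  linarith

lemma pointwise {t : ℝ} (ht0 : 0 < t) (ht : t ≤ 1 / Real.exp 2) (z : ℝ) (hz : 0 ≤ z) :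
    Real.sqrt t * Real.log t * Real.sqrt z + Real.log t * z ≤ z * Real.log z := by
  have hlt : Real.log t < 0 := by
    have : t < 1 := lt_of_le_of_lt ht (by
      rw [div_lt_one (Real.exp_pos 2)]
      calc (1:ℝ) = Real.exp 0 := (Real.exp_zero).symm
      _ < Real.exp 2 := Real.exp_lt_exp.2 (by norm_num))
    exact Real.log_neg ht0 this
  rcases le_or_gt z t with hzt | htz
  · -- z ≤ t case
    rcases eq_or_lt_of_le hz with rfl | hz0
    · simp
    -- √t log t ≤ √z log z
    have hst : Real.sqrt t ≤ 1 / Real.exp 1 := by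
      have e2 : (1:ℝ) / Real.exp 2 = (1 / Real.exp 1) ^ 2 := by
        rw [div_pow, one_pow, sq, ← Real.exp_add]; norm_num
      calc Real.sqrt t ≤ Real.sqrt (1 / Real.exp 2) := Real.sqrt_le_sqrt ht
      _ = 1 / Real.exp 1 := by rw [e2, Real.sqrt_sq (by positivity)]
    have key : Real.sqrt t * Real.log t ≤ Real.sqrt z * Real.log z := by
      have h1 := mul_log_anti (Real.sqrt_pos.2 hz0) (Real.sqrt_le_sqrt hzt) hst
      rw [Real.log_sqrt ht0.le, Real.log_sqrt hz] at h1
      linarith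
    have h2 : Real.sqrt t * Real.log t * Real.sqrt z ≤ Real.sqrt z * Real.log z * Real.sqrt z :=
      mul_le_mul_of_nonneg_right key (Real.sqrt_nonneg z)
    have h3 : Real.sqrt z * Real.log z * Real.sqrt z = z * Real.log z := by
      rw [mul_comm (Real.sqrt z) (Real.log z), mul_assoc, Real.mul_self_sqrt hz]; ring
    have h4 : Real.log t * z ≤ 0 := mul_nonpos_of_nonpos_of_nonneg hlt.le hz
    linarith
  · -- t < z case
    have h1 : Real.log t ≤ Real.log z := Real.log_le_log ht0 htz.le
    have h2 : Real.log t * z ≤ z * Real.log z := by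
      rw [mul_comm]; exact mul_le_mul_of_nonneg_left h1 hz
    have h3 : Real.sqrt t * Real.log t * Real.sqrt z ≤ 0 := by
      apply mul_nonpos_of_nonpos_of_nonneg _ (Real.sqrt_nonneg z)
      exact mul_nonpos_of_nonneg_of_nonpos (Real.sqrt_nonneg t) hlt.le
    linarith

/-- On any finite probability space, for any `h` and `0 < t ≤ 1/e²`:
`E[h² log h²] ≥ √t log t · E|h| + log t · E[h²]`. -/
theorem stmt_11 {X : Type*} [Fintype X]
    (p : X → ℝ) (hp : ∀ x, 0 ≤ p x) (hp1 : ∑ x, p x = 1)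
    (h : X → ℝ) (t : ℝ) (ht0 : 0 < t) (ht : t ≤ 1 / Real.exp 2) :
    EXp p (fun x => h x ^ 2 * Real.log (h x ^ 2)) ≥
      Real.sqrt t * Real.log t * EXp p (fun x => |h x|) +
        Real.log t * EXp p (fun x => h x ^ 2) := by
  unfold EXp
  rw [Finset.mul_sum, Finset.mul_sum, ← Finset.sum_add_distrib]
  apply Finset.sum_le_sum
  intro x _
  have hpt := pointwise ht0 ht (h x ^ 2) (sq_nonneg _)
  rw [Real.sqrt_sq_eq_abs] at hpt
  dsimp only
  nlinarith [mul_le_mul_of_nonneg_left hpt (hp x)]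
end

section
/- If {v_u}_{u∈V(G)} is a feasible solution to the standard Sparsest Cut SDP for G with objective value Opt, then the vectors v_x = (1/√k)(v_{x_1} ⊕ ... ⊕ v_{x_k}) for x ∈ V(G)^k (suitably normalized) give a feasible solution for G^{□k} with objective value Opt/k; in particular the SDP optimum satisfies Opt(G^{□k}) ≤ Opt(G)/k. -/
open Finset BigOperators
open scoped Classical

lemma sum_eval_aux {V : Type*} [Fintype V] {k : ℕ} (j : Fin k) (g : V → ℝ) :
    ∑ x : Fin k → V, g (x j) = (Fintype.card V : ℝ) ^ (k - 1) * ∑ a, g a := by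
  classical
  have h1 : ∑ x : Fin k → V, g (x j)
      = ∑ p : V × ({l : Fin k // l ≠ j} → V), g p.1 :=
    Fintype.sum_equiv (Equiv.funSplitAt j V) _ _ (fun x => rfl)
  have hc : Fintype.card ({l : Fin k // l ≠ j} → V) = Fintype.card V ^ (k - 1) := by
    rw [Fintype.card_fun]
    congr 1
    simp [Fintype.card_subtype_compl]
  rw [h1, Fintype.sum_prod_type]
  simp only [Finset.sum_const, nsmul_eq_mul, Finset.card_univ, hc, Finset.mul_sum]
  push_cast
  rfl

lemma big_sum_eval1 {V : Type*} [Fintype V] {k : ℕ} (H : V → ℝ) :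
    ∑ x : Fin k → V, ∑ j : Fin k, H (x j)
      = (k : ℝ) * (Fintype.card V : ℝ) ^ (k - 1) * ∑ a, H a := by
  rw [Finset.sum_comm]
  have : ∀ j : Fin k, ∑ x : Fin k → V, H (x j)
      = (Fintype.card V : ℝ) ^ (k - 1) * ∑ a, H a := fun j => sum_eval_aux j H
  simp only [this, Finset.sum_const, Finset.card_univ, Fintype.card_fin, nsmul_eq_mul]
  ring

lemma big_sum_eval2 {V : Type*} [Fintype V] {k : ℕ} (F : V → V → ℝ) :
    ∑ x : Fin k → V, ∑ y : Fin k → V, ∑ j : Fin k, F (x j) (y j)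
      = (k : ℝ) * (Fintype.card V : ℝ) ^ (k - 1) * (Fintype.card V : ℝ) ^ (k - 1) *
          ∑ a, ∑ b, F a b := by
  have step1 : ∀ x : Fin k → V, ∑ y : Fin k → V, ∑ j : Fin k, F (x j) (y j)
      = (Fintype.card V : ℝ) ^ (k - 1) * ∑ j : Fin k, ∑ b, F (x j) b := by
    intro x
    rw [Finset.sum_comm]
    have : ∀ j : Fin k, ∑ y : Fin k → V, F (x j) (y j)
        = (Fintype.card V : ℝ) ^ (k - 1) * ∑ b, F (x j) b :=
      fun j => sum_eval_aux j (fun b => F (x j) b)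
    simp only [this, Finset.mul_sum]
  simp only [step1, ← Finset.mul_sum]
  rw [big_sum_eval1 (fun a => ∑ b, F a b)]
  ring

lemma master_calc {V : Type*} [Fintype V] [DecidableEq V] [Nonempty V]
    (G : SimpleGraph V) (d : ℕ) (hd : 0 < d)
    (m : ℕ) (v : V → EuclideanSpace ℝ (Fin m))
    (hS : ∑ x, ∑ y, ‖v x - v y‖ ^ 2 = (Fintype.card V : ℝ) ^ 2)
    (Opt : ℝ)
    (hT : (∑ x, ∑ y, if G.Adj x y then ‖v x - v y‖ ^ 2 else 0)
        = Opt * ((d : ℝ) * (Fintype.card V : ℝ)))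
    (k : ℕ) (hk : 0 < k)
    (P : (Fin k → V) → (Fin k → V) → ℝ)
    (hP : ∀ x y, P x y = (∑ j, ‖v (x j) - v (y j)‖ ^ 2) / k) :
    ((∑ x : Fin k → V, ∑ y : Fin k → V, P x y) /
        (((Fintype.card V : ℝ) ^ k) ^ 2) = 1) ∧
    ((∑ x : Fin k → V, ∑ p : Fin k × V,
        if G.Adj (x p.1) p.2 then P x (Function.update x p.1 p.2) else 0) /
      ((k : ℝ) * d * (Fintype.card V : ℝ) ^ k) = Opt / k) := by
  set n : ℝ := (Fintype.card V : ℝ) with hn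
  have hnpos : 0 < n := by
    simp only [hn]
    exact_mod_cast Fintype.card_pos
  have hkR : (0:ℝ) < k := by exact_mod_cast hk
  have hkk : (k - 1) + 1 = k := Nat.succ_pred_eq_of_pos hk
  have hpow : n ^ (k - 1) * n = n ^ k := by
    rw [← pow_succ, hkk]
  constructor
  · -- feasibility
    have h1 : ∑ x : Fin k → V, ∑ y : Fin k → V, P x y
        = (∑ x : Fin k → V, ∑ y : Fin k → V, ∑ j : Fin k,
            ‖v (x j) - v (y j)‖ ^ 2) / k := by
      simp only [hP, ← Finset.sum_div]
    rw [h1, big_sum_eval2 (fun a b => ‖v a - v b‖ ^ 2), hS]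
    rw [div_eq_one_iff_eq (by positivity)]
    field_simp
    rw [← hpow]
    ring
  · -- objective
    have hPupd : ∀ (x : Fin k → V) (j : Fin k) (y : V),
        P x (Function.update x j y) = ‖v (x j) - v y‖ ^ 2 / k := by
      intro x j y
      rw [hP]
      congr 1
      rw [Finset.sum_eq_single j]
      · simp
      · intro l _ hl
        simp [Function.update_of_ne hl]
      · simp
    have h2 : ∀ (x : Fin k → V) (p : Fin k × V),
        (if G.Adj (x p.1) p.2 then P x (Function.update x p.1 p.2) else 0)
          = (if G.Adj (x p.1) p.2 then ‖v (x p.1) - v p.2‖ ^ 2 else 0) / k := by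
      intro x p
      split_ifs with h
      · exact hPupd x p.1 p.2
      · simp
    simp only [h2, ← Finset.sum_div]
    have h3 : ∑ x : Fin k → V, ∑ p : Fin k × V,
        (if G.Adj (x p.1) p.2 then ‖v (x p.1) - v p.2‖ ^ 2 else 0)
        = ∑ x : Fin k → V, ∑ j : Fin k,
            (fun a => ∑ y, if G.Adj a y then ‖v a - v y‖ ^ 2 else 0) (x j) := by
      refine Finset.sum_congr rfl fun x _ => ?_
      rw [Fintype.sum_prod_type]
    rw [h3, big_sum_eval1 (fun a => ∑ y, if G.Adj a y then ‖v a - v y‖ ^ 2 else 0)]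
    rw [hT]
    rw [div_div]
    rw [div_eq_div_iff (by positivity) (by positivity)]
    rw [← hpow]
    ring

noncomputable def uuAux {V : Type*} (k m : ℕ) (v : V → EuclideanSpace ℝ (Fin m))
    (x : Fin k → V) : EuclideanSpace ℝ (Fin (k * m)) :=
  WithLp.toLp 2 fun i => (Real.sqrt k)⁻¹ *
    (v (x (finProdFinEquiv.symm i).1) (finProdFinEquiv.symm i).2)

lemma norm_uuAux {V : Type*} [Fintype V] (k m : ℕ) (v : V → EuclideanSpace ℝ (Fin m))
    (x y : Fin k → V) :
    ‖uuAux k m v x - uuAux k m v y‖ ^ 2 = (∑ j, ‖v (x j) - v (y j)‖ ^ 2) / k := by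
  have hnorm : ∀ z : EuclideanSpace ℝ (Fin (k*m)), ‖z‖^2 = ∑ i, (z i)^2 := by
    intro z
    rw [PiLp.norm_sq_eq_of_L2]
    simp [Real.norm_eq_abs, sq_abs]
  rw [hnorm]
  have hre : ∑ i : Fin (k*m), ((uuAux k m v x - uuAux k m v y) i)^2
      = ∑ p : Fin k × Fin m, ((uuAux k m v x - uuAux k m v y) (finProdFinEquiv p))^2 :=
    (Fintype.sum_equiv finProdFinEquiv _ _ (fun p => rfl)).symm
  rw [hre, Fintype.sum_prod_type]
  have hk2 : ((Real.sqrt k)⁻¹)^2 = (k:ℝ)⁻¹ := by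
    rw [inv_pow, Real.sq_sqrt (by positivity)]
  have hterm : ∀ (j : Fin k) (t : Fin m),
      ((uuAux k m v x - uuAux k m v y) (finProdFinEquiv (j, t)))^2
        = (k:ℝ)⁻¹ * ((v (x j) - v (y j)) t)^2 := by
    intro j t
    have : (uuAux k m v x - uuAux k m v y) (finProdFinEquiv (j, t))
        = (Real.sqrt k)⁻¹ * ((v (x j) - v (y j)) t) := by
      show uuAux k m v x (finProdFinEquiv (j,t)) - uuAux k m v y (finProdFinEquiv (j,t)) = _
      have he : finProdFinEquiv.symm (finProdFinEquiv (j,t)) = (j,t) :=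
        Equiv.symm_apply_apply _ _
      simp only [uuAux, WithLp.ofLp_toLp]
      rw [he]
      have : (v (x j) - v (y j)) t = v (x j) t - v (y j) t := rfl
      rw [this]
      ring
    rw [this, mul_pow, hk2]
  simp only [hterm, ← Finset.mul_sum]
  have hn : ∀ j, ∑ t : Fin m, ((v (x j) - v (y j)) t)^2 = ‖v (x j) - v (y j)‖^2 := by
    intro j
    rw [PiLp.norm_sq_eq_of_L2]
    simp [Real.norm_eq_abs, sq_abs]
  simp only [hn]
  ring

lemma norm_wAux {V : Type*} [Fintype V] (k m : ℕ) (v : V → EuclideanSpace ℝ (Fin m))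
    (w : (Fin k → V) → PiLp 2 (fun _ : Fin k => EuclideanSpace ℝ (Fin m)))
    (hw : w = fun x => (Real.sqrt k)⁻¹ •
        (WithLp.equiv 2 (Fin k → EuclideanSpace ℝ (Fin m))).symm (fun j => v (x j)))
    (x y : Fin k → V) :
    ‖w x - w y‖ ^ 2 = (∑ j, ‖v (x j) - v (y j)‖ ^ 2) / k := by
  subst hw
  rw [← smul_sub, norm_smul, mul_pow, PiLp.norm_sq_eq_of_L2]
  have h2 : ∀ j : Fin k, ((WithLp.equiv 2 (Fin k → EuclideanSpace ℝ (Fin m))).symm (fun j => v (x j)) -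
      (WithLp.equiv 2 (Fin k → EuclideanSpace ℝ (Fin m))).symm (fun j => v (y j))) j
      = v (x j) - v (y j) := fun j => rfl
  simp only [h2]
  have : ‖(Real.sqrt k)⁻¹‖ ^ 2 = (k : ℝ)⁻¹ := by
    rw [norm_inv, Real.norm_eq_abs, abs_of_nonneg (Real.sqrt_nonneg _), inv_pow,
      Real.sq_sqrt (by positivity)]
  rw [this]
  ring

/-- A feasible solution `{v_u}` of the standard Sparsest Cut SDP for `G`
with objective value `Opt` yields, via `w_x = (1/√k)(v_{x_1} ⊕ ⋯ ⊕ v_{x_k})`, a feasible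
solution for `G^{□k}` with objective value `Opt/k`; in particular the SDP optimum
satisfies `Opt(G^{□k}) ≤ Opt(G)/k`. -/
theorem stmt_15 {V : Type*} [Fintype V] [DecidableEq V] [Nonempty V]
    (G : SimpleGraph V) (d : ℕ) (hd : 0 < d) (hreg : G.IsRegularOfDegree d)
    (m : ℕ) (v : V → EuclideanSpace ℝ (Fin m))
    (hfeas : (∑ x, ∑ y, ‖v x - v y‖ ^ 2) / ((Fintype.card V : ℝ) ^ 2) = 1)
    (Opt : ℝ)
    (hobj : (∑ x, ∑ y, if G.Adj x y then ‖v x - v y‖ ^ 2 else 0) /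
        ((d : ℝ) * (Fintype.card V : ℝ)) = Opt)
    (k : ℕ) (hk : 0 < k) :
    (∀ w : (Fin k → V) → PiLp 2 (fun _ : Fin k => EuclideanSpace ℝ (Fin m)),
      (w = fun x => (Real.sqrt k)⁻¹ •
          (WithLp.equiv 2 (Fin k → EuclideanSpace ℝ (Fin m))).symm (fun j => v (x j))) →
      ((∑ x : Fin k → V, ∑ y : Fin k → V, ‖w x - w y‖ ^ 2) /
          (((Fintype.card V : ℝ) ^ k) ^ 2) = 1 ∧
        (∑ x : Fin k → V, ∑ p : Fin k × V,
            if G.Adj (x p.1) p.2 then ‖w x - w (Function.update x p.1 p.2)‖ ^ 2 else 0) /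
          ((k : ℝ) * d * (Fintype.card V : ℝ) ^ k) = Opt / k)) ∧
    sInf {r : ℝ | ∃ (m' : ℕ) (u : (Fin k → V) → EuclideanSpace ℝ (Fin m')),
        (∑ x : Fin k → V, ∑ y : Fin k → V, ‖u x - u y‖ ^ 2) /
          (((Fintype.card V : ℝ) ^ k) ^ 2) = 1 ∧
        r = (∑ x : Fin k → V, ∑ p : Fin k × V,
            if G.Adj (x p.1) p.2 then ‖u x - u (Function.update x p.1 p.2)‖ ^ 2 else 0) /
          ((k : ℝ) * d * (Fintype.card V : ℝ) ^ k)} ≤ Opt / k := by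
  classical
  have hnpos : (0:ℝ) < (Fintype.card V : ℝ) := by exact_mod_cast Fintype.card_pos
  have hdR : (0:ℝ) < (d : ℝ) := by exact_mod_cast hd
  have hS : ∑ x, ∑ y, ‖v x - v y‖ ^ 2 = (Fintype.card V : ℝ) ^ 2 := by
    rw [div_eq_one_iff_eq (by positivity)] at hfeas
    exact hfeas
  have hT : (∑ x, ∑ y, if G.Adj x y then ‖v x - v y‖ ^ 2 else 0)
      = Opt * ((d : ℝ) * (Fintype.card V : ℝ)) := by
    rw [div_eq_iff (mul_pos hdR hnpos).ne'] at hobj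
    exact hobj
  constructor
  · intro w hw
    exact master_calc G d hd m v hS Opt hT k hk (fun x y => ‖w x - w y‖ ^ 2)
      (norm_wAux k m v w hw)
  · have hm := master_calc G d hd m v hS Opt hT k hk
      (fun x y => ‖uuAux k m v x - uuAux k m v y‖ ^ 2) (norm_uuAux k m v)
    refine csInf_le ⟨0, ?_⟩ ⟨k * m, uuAux k m v, hm.1, hm.2.symm⟩
    rintro r ⟨m', u, -, rfl⟩
    apply div_nonneg
    · refine Finset.sum_nonneg fun x _ => Finset.sum_nonneg fun p _ => ?_
      split_ifs <;> positivity
    · positivity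
end

section
/- Given Lasserre-level-t vectors {v_S}_{S⊆V(G), |S|≤t} satisfying ⟨v_{S₁}, v_{S₂}⟩ = ⟨v_{T₁}, v_{T₂}⟩ whenever S₁ Δ S₂ = T₁ Δ T₂, the vectors for T ⊆ V(G^{□k}) defined by v_T = ⊕_{j=1}^k v_{T_j}, where T_j = {y ∈ V(G) : #{x ∈ T : x_j = y} is odd}, satisfy the same consistency constraints: ⟨v_{T}, v_{T'}⟩ = ⟨v_{U}, v_{U'}⟩ whenever T Δ T' = U Δ U'. -/
open Finset
open scoped RealInnerProductSpace

/-- For `T ⊆ V^k`, the set `T_j ⊆ V` of `j`-th coordinates appearing an odd number of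
times in `T`. -/
def oddProj {V : Type*} [Fintype V] [DecidableEq V] {k : ℕ}
    (T : Finset (Fin k → V)) (j : Fin k) : Finset V :=
  Finset.univ.filter (fun y => Odd (T.filter (fun x => x j = y)).card)

lemma odd_card_symmDiff_iff {V : Type*} [DecidableEq V] (A B : Finset V) :
    Odd (symmDiff A B).card ↔ (Odd A.card ↔ ¬ Odd B.card) := by
  have h1 : (symmDiff A B).card = (A \ B).card + (B \ A).card := by
    rw [symmDiff_def]; exact Finset.card_union_of_disjoint disjoint_sdiff_sdiff
  have h2 : (A \ B).card + (A ∩ B).card = A.card := Finset.card_sdiff_add_card_inter _ _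
  have h3 : (B \ A).card + (B ∩ A).card = B.card := Finset.card_sdiff_add_card_inter _ _
  have h4 : (A ∩ B).card = (B ∩ A).card := by rw [Finset.inter_comm]
  simp only [Nat.odd_iff] at *
  omega

lemma oddProj_card_le {V : Type*} [Fintype V] [DecidableEq V] {k : ℕ}
    (T : Finset (Fin k → V)) (j : Fin k) : (oddProj T j).card ≤ T.card := by
  have hsub : oddProj T j ⊆ T.image (fun x => x j) := by
    intro y hy
    simp only [oddProj, Finset.mem_filter, Finset.mem_univ, true_and] at hy
    have hpos : 0 < (T.filter (fun x => x j = y)).card := hy.pos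
    obtain ⟨x, hx⟩ := Finset.card_pos.mp hpos
    simp only [Finset.mem_filter] at hx
    exact Finset.mem_image.mpr ⟨x, hx.1, hx.2⟩
  exact le_trans (Finset.card_le_card hsub) (Finset.card_image_le)

lemma oddProj_symmDiff {V : Type*} [Fintype V] [DecidableEq V] {k : ℕ}
    (T T' : Finset (Fin k → V)) (j : Fin k) :
    oddProj (symmDiff T T') j = symmDiff (oddProj T j) (oddProj T' j) := by
  ext y
  have hfilt : (symmDiff T T').filter (fun x => x j = y)
      = symmDiff (T.filter (fun x => x j = y)) (T'.filter (fun x => x j = y)) := by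
    ext x; simp [symmDiff, Finset.mem_filter]; tauto
  simp only [oddProj, Finset.mem_filter, Finset.mem_univ, true_and, Finset.mem_symmDiff,
    hfilt, odd_card_symmDiff_iff]
  tauto

/-- Given Lasserre level-`t` vectors `{v_S}` with
`⟨v_{S₁}, v_{S₂}⟩ = ⟨v_{T₁}, v_{T₂}⟩` whenever `S₁ Δ S₂ = T₁ Δ T₂`, the direct-sum
vectors `W_T = ⊕_j v_{T_j}` (with `T_j` the odd-multiplicity projection) satisfy the same
consistency constraints on `V(G^{□k}) = V^k`. -/
theorem stmt_17 {V : Type*} [Fintype V] [DecidableEq V]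
    {H : Type*} [NormedAddCommGroup H] [InnerProductSpace ℝ H]
    (t : ℕ) (v : Finset V → H)
    (hcons : ∀ S₁ S₂ T₁ T₂ : Finset V,
      S₁.card ≤ t → S₂.card ≤ t → T₁.card ≤ t → T₂.card ≤ t →
      symmDiff S₁ S₂ = symmDiff T₁ T₂ → ⟪v S₁, v S₂⟫ = ⟪v T₁, v T₂⟫)
    (k : ℕ)
    (W : Finset (Fin k → V) → PiLp 2 (fun _ : Fin k => H))
    (hW : W = fun T => (WithLp.equiv 2 (Fin k → H)).symm (fun j => v (oddProj T j))) :
    ∀ T T' U U' : Finset (Fin k → V),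
      T.card ≤ t → T'.card ≤ t → U.card ≤ t → U'.card ≤ t →
      symmDiff T T' = symmDiff U U' → ⟪W T, W T'⟫ = ⟪W U, W U'⟫ := by
  intro T T' U U' hT hT' hU hU' hsym
  subst hW
  simp only [PiLp.inner_apply, WithLp.equiv_symm_apply, PiLp.toLp_apply]
  refine Finset.sum_congr rfl fun j _ => ?_
  refine hcons _ _ _ _ (le_trans (oddProj_card_le T j) hT)
    (le_trans (oddProj_card_le T' j) hT') (le_trans (oddProj_card_le U j) hU)
    (le_trans (oddProj_card_le U' j) hU') ?_
  rw [← oddProj_symmDiff, ← oddProj_symmDiff, hsym]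
end
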